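/- Let z₀ ∈ Z with X-conjugacy class C, and for each z ∈ C fix z̄ ∈ X with z = z̄⁻¹z₀z̄. If J ⊆ J_{z₀} is an irreducible subrepresentation of the centralizer X_{z₀} (under the linearized ⋊̃-action), then M_J = ⊕_{z∈C}(J ⋊̃ z̄) is an irreducible crossed submodule of k[X]. Moreover, if J_{z₀} = J₁ ⊕ … ⊕ J_n is a decomposition into irreducible X_{z₀}-subrepresentations, then M_C := span_k ‖·‖⁻¹(C) = M_{J₁} ⊕ … ⊕ M_{J_n} is a decomposition of M_C into irreducible crossed submodules. -/

import Mathlib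

/-- The linearization of the right action `⋊̃ y` on `k[X] = X →₀ k`. -/
noncomputable def linTact (k : Type*) [Field k] {X : Type*} (tact : X → X → X) (y : X) :
    (X →₀ k) →ₗ[k] (X →₀ k) :=
  Finsupp.lmapDomain k k (fun x => tact x y)

/-- The homogeneous component `J_z = span_k ‖·‖⁻¹(z)` of `k[X]`. -/
noncomputable def Jsub (k : Type*) [Field k] {X : Type*} (norm : X → X) (z : X) :
    Submodule k (X →₀ k) :=
  Submodule.span k ((fun x => Finsupp.single x (1 : k)) '' (norm ⁻¹' {z}))

/-- A subspace `V ⊆ k[X]` is a crossed submodule if it is stable under the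
linearized `⋊̃`-action of `X` and `V = ⊕_{z∈Z}(V ∩ J_z)`. -/
def IsCrossedSubmodule (k : Type*) [Field k] {X : Type*} (norm : X → X)
    (tact : X → X → X) (V : Submodule k (X →₀ k)) : Prop :=
  (∀ y : X, V.map (linTact k tact y) ≤ V) ∧
  V = ⨆ z ∈ Set.range norm, V ⊓ Jsub k norm z

/-- A crossed submodule is irreducible if it is nonzero and the only crossed
submodules contained in it are `0` and itself. -/
def IsIrreducibleCrossedSubmodule (k : Type*) [Field k] {X : Type*} (norm : X → X)
    (tact : X → X → X) (V : Submodule k (X →₀ k)) : Prop :=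
  V ≠ ⊥ ∧ IsCrossedSubmodule k norm tact V ∧
    ∀ W : Submodule k (X →₀ k), IsCrossedSubmodule k norm tact W → W ≤ V → W = ⊥ ∨ W = V

/-- `J` is an irreducible subrepresentation of the centralizer of `z₀` inside
`J_{z₀}`, for the linearized `⋊̃`-action. -/
def IsIrreducibleCentralizerSubrep (k : Type*) [Field k] {X : Type*} [Group X]
    (norm : X → X) (tact : X → X → X) (z₀ : X) (J : Submodule k (X →₀ k)) : Prop :=
  J ≤ Jsub k norm z₀ ∧ J ≠ ⊥ ∧
    (∀ x ∈ Subgroup.centralizer ({z₀} : Set X), J.map (linTact k tact x) ≤ J) ∧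
    ∀ J' : Submodule k (X →₀ k), J' ≤ J →
      (∀ x ∈ Subgroup.centralizer ({z₀} : Set X), J'.map (linTact k tact x) ≤ J') →
      J' = ⊥ ∨ J' = J


section PhaseA
variable {X : Type*} [Group X] {G M : Subgroup X}

theorem tact_core
    (hbij : Function.Bijective (fun p : ↥G × ↥M => (p.1 : X) * (p.2 : X)))
    (rho : ↥M → ↥G → ↥G) (sig : ↥M → ↥G → ↥M)
    (hfact : ∀ (s : ↥M) (u : ↥G), (s : X) * (u : X) = (rho s u : X) * (sig s u : X))
    (norm : X → X)
    (hnorm : ∀ (v : ↥G) (t : ↥M), norm ((v : X) * (t : X)) = (v : X)⁻¹ * (t : X)⁻¹ * (v : X))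
    (tact : X → X → X)
    (htact : ∀ (v u : ↥G) (t s : ↥M),
      tact ((v : X) * (t : X)) ((u : X) * (s : X)) =
        (rho (sig s⁻¹ (v * u)⁻¹) (v * u) : X) *
          ((sig s⁻¹ (v * u)⁻¹ : X) * (t : X) * (sig s⁻¹ (v * u)⁻¹ : X)⁻¹)) :
    (∀ x, tact x 1 = x) ∧ (∀ x y y', tact (tact x y) y' = tact x (y * y')) ∧
    (∀ x y, norm (tact x y) = y⁻¹ * norm x * y) := by
  classical
  set e := Equiv.ofBijective _ hbij with he
  set P : X → ↥G × ↥M := fun x => e.symm x with hP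
  have dec : ∀ x, ((P x).1 : X) * ((P x).2 : X) = x := fun x => e.apply_symm_apply x
  have uniq : ∀ (v : ↥G) (t : ↥M), P ((v : X) * (t : X)) = (v, t) := by
    intro v t
    have h : e (v, t) = (v : X) * (t : X) := rfl
    rw [hP, ← h]
    exact e.symm_apply_apply (v, t)
  -- the clean formula for tact
  have Fm : ∀ x y : X, tact x y =
      ((P ((((P x).1 : X) * y)⁻¹)).2 : X) * (((P x).1 : X) * y) *
        ((P ((((P x).1 : X) * y)⁻¹)).2 : X) * ((P x).2 : X) *
        ((P ((((P x).1 : X) * y)⁻¹)).2 : X)⁻¹ := by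
    intro x y
    set v := (P x).1 with hv
    set t := (P x).2 with ht
    set u := (P y).1 with hu
    set s := (P y).2 with hs
    have hx : ((v : X)) * (t : X) = x := dec x
    have hy : ((u : X)) * (s : X) = y := dec y
    set g' := rho s⁻¹ (v * u)⁻¹ with hg'
    set st := sig s⁻¹ (v * u)⁻¹ with hstdef
    have h1 : ((s : X))⁻¹ * ((v : X) * (u : X))⁻¹ = (g' : X) * (st : X) := by
      have h := hfact s⁻¹ (v * u)⁻¹
      simpa only [InvMemClass.coe_inv, MulMemClass.coe_mul] using h
    have hA : (((v : X)) * y)⁻¹ = (g' : X) * (st : X) := by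
      rw [← hy, ← h1]; group
    have hPA : P (((v : X) * y)⁻¹) = (g', st) := by rw [hA]; exact uniq g' st
    have hst2 : (st : X) = ((g' : X))⁻¹ * (((s : X))⁻¹ * (((v : X)) * (u : X))⁻¹) := by
      rw [h1]; group
    have h3 : (st : X) * ((v : X) * (u : X)) = ((g'⁻¹ : ↥G) : X) * ((s⁻¹ : ↥M) : X) := by
      simp only [InvMemClass.coe_inv]
      rw [hst2]; group
    have h2 : (st : X) * ((v : X) * (u : X)) =
        ((rho st (v * u) : ↥G) : X) * ((sig st (v * u) : ↥M) : X) := by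
      have h := hfact st (v * u)
      simpa only [MulMemClass.coe_mul] using h
    have h4 : P ((st : X) * ((v : X) * (u : X))) = (rho st (v * u), sig st (v * u)) := by
      rw [h2]; exact uniq _ _
    have h5 : P ((st : X) * ((v : X) * (u : X))) = (g'⁻¹, s⁻¹) := by
      rw [h3]; exact uniq _ _
    have h6 : rho st (v * u) = g'⁻¹ := congrArg Prod.fst (h4.symm.trans h5)
    have hmain := htact v u t s
    rw [hx, hy] at hmain
    rw [hmain, hPA]
    show ((rho st (v*u) : ↥G) : X) * ((st : X) * (t : X) * ((st : X))⁻¹)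
        = (st : X) * ((v : X) * y) * (st : X) * (t : X) * ((st : X))⁻¹
    rw [h6]
    have hvy : ((v : X)) * y = ((st : X))⁻¹ * ((g' : X))⁻¹ := by
      rw [← inv_inv (((v : X)) * y), hA]; group
    simp only [InvMemClass.coe_inv]
    rw [hvy]; group
  -- components of tact x y
  have Cm : ∀ x y : X, P (tact x y) =
      ((P ((((P x).1 : X) * y)⁻¹)).1⁻¹,
        (P ((((P x).1 : X) * y)⁻¹)).2 * (P x).2 * (P ((((P x).1 : X) * y)⁻¹)).2⁻¹) := by
    intro x y
    set v := (P x).1 with hv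
    set t := (P x).2 with ht
    set g' := (P (((v : X) * y)⁻¹)).1 with hg'
    set st := (P (((v : X) * y)⁻¹)).2 with hst
    have hda : (g' : X) * (st : X) = ((v : X) * y)⁻¹ := dec _
    have haa : (v : X) * y = ((st : X))⁻¹ * ((g' : X))⁻¹ := by
      rw [← inv_inv ((v : X) * y), ← hda]; group
    have hxy : tact x y = ((g'⁻¹ : ↥G) : X) * ((st * t * st⁻¹ : ↥M) : X) := by
      rw [Fm x y]
      show (st : X) * ((v : X) * y) * (st : X) * (t : X) * ((st : X))⁻¹
          = ((g'⁻¹ : ↥G) : X) * ((st * t * st⁻¹ : ↥M) : X)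
      simp only [InvMemClass.coe_inv, MulMemClass.coe_mul]
      rw [haa]; group
    rw [hxy]; exact uniq _ _
  refine ⟨?_, ?_, ?_⟩
  · -- tact_one
    intro x
    have h1 : ((((P x).1 : X)) * 1)⁻¹ = (((P x).1⁻¹ : ↥G) : X) * ((1 : ↥M) : X) := by
      push_cast; group
    have h2 : P (((((P x).1 : X)) * 1)⁻¹) = ((P x).1⁻¹, 1) := by rw [h1]; exact uniq _ _
    rw [Fm x 1, h2]
    show ((1 : ↥M) : X) * (((P x).1 : X) * 1) * ((1 : ↥M) : X) * ((P x).2 : X)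
        * (((1 : ↥M) : X))⁻¹ = x
    simp only [OneMemClass.coe_one]
    conv_rhs => rw [← dec x]
    group
  · -- tact_mul
    intro x y y'
    set v := (P x).1 with hv
    set t := (P x).2 with ht
    set g' := (P (((v : X) * y)⁻¹)).1 with hg'
    set st := (P (((v : X) * y)⁻¹)).2 with hst
    have hda : (g' : X) * (st : X) = ((v : X) * y)⁻¹ := dec _
    have hC := Cm x y
    have hF2 := Fm (tact x y) y'
    rw [hC] at hF2
    set b := ((g'⁻¹ : ↥G) : X) * y' with hb
    set g'' := (P b⁻¹).1 with hg''
    set st' := (P b⁻¹).2 with hst'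
    have hdb : (g'' : X) * (st' : X) = b⁻¹ := dec _
    have h1 : (((v : X)) * (y * y'))⁻¹ = b⁻¹ * (st : X) := by
      rw [hb]
      simp only [InvMemClass.coe_inv]
      have hstep : ((v : X)) * (y * y') = (((v : X)) * y) * y' := by group
      rw [hstep, mul_inv_rev, ← hda]
      group
    have hkey : (((v : X)) * (y * y'))⁻¹ = ((g'' : X)) * (((st' * st : ↥M)) : X) := by
      rw [h1, ← hdb]
      simp only [MulMemClass.coe_mul]
      group
    have hP3 : P (((v : X) * (y * y'))⁻¹) = (g'', st' * st) := by rw [hkey]; exact uniq _ _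
    rw [hF2, Fm x (y * y')]
    show (st' : X) * b * (st' : X) * ((st * t * st⁻¹ : ↥M) : X) * ((st' : X))⁻¹
      = ((P (((v : X) * (y * y'))⁻¹)).2 : X) * (((v : X)) * (y * y'))
        * ((P (((v : X) * (y * y'))⁻¹)).2 : X) * ((t : X))
        * (((P (((v : X) * (y * y'))⁻¹)).2 : X))⁻¹
    rw [hP3]
    show (st' : X) * b * (st' : X) * ((st * t * st⁻¹ : ↥M) : X) * ((st' : X))⁻¹
      = ((st' * st : ↥M) : X) * (((v : X)) * (y * y')) * ((st' * st : ↥M) : X)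
        * ((t : X)) * (((st' * st : ↥M) : X))⁻¹
    have haa : ((v : X)) * y = ((st : X))⁻¹ * ((g' : X))⁻¹ := by
      rw [← inv_inv (((v : X)) * y), ← hda]; group
    have hv2 : ((v : X)) * (y * y') = (((st : X))⁻¹ * ((g' : X))⁻¹) * y' := by
      rw [← haa]; group
    rw [hb, hv2]
    simp only [InvMemClass.coe_inv, MulMemClass.coe_mul]
    group
  · -- norm_tact
    intro x y
    set v := (P x).1 with hv
    set t := (P x).2 with ht
    set g' := (P (((v : X) * y)⁻¹)).1 with hg'
    set st := (P (((v : X) * y)⁻¹)).2 with hst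
    have hda : (g' : X) * (st : X) = ((v : X) * y)⁻¹ := dec _
    have hC := Cm x y
    have hxy : tact x y = ((g'⁻¹ : ↥G) : X) * ((st * t * st⁻¹ : ↥M) : X) := by
      conv_lhs => rw [← dec (tact x y)]
      rw [hC]
    have h1 : norm (tact x y) = (((g'⁻¹ : ↥G) : X))⁻¹ * (((st * t * st⁻¹ : ↥M) : X))⁻¹
        * ((g'⁻¹ : ↥G) : X) := by rw [hxy]; exact hnorm _ _
    have h2 : norm x = ((v : X))⁻¹ * ((t : X))⁻¹ * (v : X) := by
      conv_lhs => rw [← dec x]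
      exact hnorm v t
    rw [h1, h2]
    have hga2 : (g' : X) = ((((v : X)) * y)⁻¹) * ((st : X))⁻¹ := by
      rw [← hda]; group
    simp only [InvMemClass.coe_inv, MulMemClass.coe_mul]
    rw [hga2]
    group

end PhaseA

section PhaseB
variable {k : Type*} [Field k] {X : Type*}

theorem linTact_single (tact : X → X → X) (y x : X) (c : k) :
    linTact k tact y (Finsupp.single x c) = Finsupp.single (tact x y) c := by
  simp [linTact, Finsupp.mapDomain_single]

theorem linTact_comp {X : Type*} [Group X] (tact : X → X → X)
    (h2 : ∀ x y y', tact (tact x y) y' = tact x (y * y')) (y y' : X) :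
    (linTact k tact y').comp (linTact k tact y) = linTact k tact (y * y') := by
  apply Finsupp.lhom_ext
  intro a b
  simp [linTact_single, h2]

theorem linTact_one {X : Type*} [Group X] (tact : X → X → X) (h1 : ∀ x, tact x 1 = x) :
    linTact k tact (1 : X) = (LinearMap.id : (X →₀ k) →ₗ[k] (X →₀ k)) := by
  apply Finsupp.lhom_ext
  intro a b
  simp [linTact_single, h1]

theorem map_linTact_map {X : Type*} [Group X] (tact : X → X → X)
    (h2 : ∀ x y y', tact (tact x y) y' = tact x (y * y')) (V : Submodule k (X →₀ k)) (y y' : X) :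
    (V.map (linTact k tact y)).map (linTact k tact y') = V.map (linTact k tact (y * y')) := by
  rw [← linTact_comp tact h2 y y', Submodule.map_comp]

theorem map_linTact_inv {X : Type*} [Group X] (tact : X → X → X)
    (h1 : ∀ x, tact x 1 = x) (h2 : ∀ x y y', tact (tact x y) y' = tact x (y * y'))
    (V : Submodule k (X →₀ k)) (y : X) :
    (V.map (linTact k tact y)).map (linTact k tact y⁻¹) = V := by
  rw [map_linTact_map tact h2, mul_inv_cancel, linTact_one tact h1, Submodule.map_id]

theorem linTact_injective {X : Type*} [Group X] (tact : X → X → X)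
    (h1 : ∀ x, tact x 1 = x) (h2 : ∀ x y y', tact (tact x y) y' = tact x (y * y'))
    (y : X) : Function.Injective (linTact k tact y) := by
  apply Function.LeftInverse.injective (g := linTact k tact y⁻¹)
  intro f
  rw [← LinearMap.comp_apply, linTact_comp tact h2, mul_inv_cancel, linTact_one tact h1]
  rfl

theorem single_mem_Jsub (norm : X → X) {x z : X} (h : norm x = z) :
    Finsupp.single x (1 : k) ∈ Jsub k norm z := Submodule.subset_span ⟨x, h, rfl⟩

theorem tact_image_fiber {X : Type*} [Group X] (norm : X → X) (tact : X → X → X)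
    (h1 : ∀ x, tact x 1 = x) (h2 : ∀ x y y', tact (tact x y) y' = tact x (y * y'))
    (h3 : ∀ x y, norm (tact x y) = y⁻¹ * norm x * y) (z y : X) :
    (fun x => tact x y) '' (norm ⁻¹' {z}) = norm ⁻¹' {y⁻¹ * z * y} := by
  ext w
  constructor
  · rintro ⟨x, hx, rfl⟩
    simp only [Set.mem_preimage, Set.mem_singleton_iff] at hx ⊢
    rw [h3, hx]
  · intro hw
    simp only [Set.mem_preimage, Set.mem_singleton_iff] at hw
    refine ⟨tact w y⁻¹, ?_, ?_⟩
    · simp only [Set.mem_preimage, Set.mem_singleton_iff]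
      rw [h3, hw]; group
    · show tact (tact w y⁻¹) y = w
      rw [h2, inv_mul_cancel, h1]

theorem map_Jsub {X : Type*} [Group X] (norm : X → X) (tact : X → X → X)
    (h1 : ∀ x, tact x 1 = x) (h2 : ∀ x y y', tact (tact x y) y' = tact x (y * y'))
    (h3 : ∀ x y, norm (tact x y) = y⁻¹ * norm x * y) (z y : X) :
    (Jsub k norm z).map (linTact k tact y) = Jsub k norm (y⁻¹ * z * y) := by
  unfold Jsub
  rw [Submodule.map_span]
  congr 1
  rw [← tact_image_fiber norm tact h1 h2 h3 z y, ← Set.image_comp, ← Set.image_comp]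
  apply Set.image_congr
  intro x _
  exact linTact_single tact y x 1

noncomputable def projN (k : Type*) [Field k] {X : Type*} [DecidableEq X] (norm : X → X)
    (z : X) : (X →₀ k) →ₗ[k] (X →₀ k) :=
  Finsupp.lsum k (fun x => if norm x = z then Finsupp.lsingle x else 0)

theorem projN_single [DecidableEq X] (norm : X → X) (z x : X) (c : k) :
    projN k norm z (Finsupp.single x c) =
      if norm x = z then Finsupp.single x c else 0 := by
  rw [projN, Finsupp.lsum_single]
  split_ifs <;> simp

theorem projN_fix [DecidableEq X] (norm : X → X) (z : X) {f : X →₀ k}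
    (hf : f ∈ Jsub k norm z) : projN k norm z f = f := by
  induction hf using Submodule.span_induction with
  | mem x hx =>
    obtain ⟨x₀, hx₀, rfl⟩ := hx
    rw [projN_single, if_pos (by simpa using hx₀)]
  | zero => simp
  | add x y _ _ hx hy => rw [map_add, hx, hy]
  | smul c x _ hx => rw [map_smul, hx]

theorem projN_kill [DecidableEq X] (norm : X → X) {z z' : X} (hzz : z' ≠ z) {f : X →₀ k}
    (hf : f ∈ Jsub k norm z') : projN k norm z f = 0 := by
  induction hf using Submodule.span_induction with
  | mem x hx =>
    obtain ⟨x₀, hx₀, rfl⟩ := hx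
    rw [projN_single, if_neg]
    rw [Set.mem_preimage, Set.mem_singleton_iff] at hx₀
    rw [hx₀]; exact hzz
  | zero => simp
  | add x y _ _ hx hy => rw [map_add, hx, hy, add_zero]
  | smul c x _ hx => rw [map_smul, hx, smul_zero]

theorem projN_mem [DecidableEq X] (norm : X → X) (z : X) (f : X →₀ k) :
    projN k norm z f ∈ Jsub k norm z := by
  induction f using Finsupp.induction_linear with
  | zero => simp
  | add f g hf hg => rw [map_add]; exact Submodule.add_mem _ hf hg
  | single x c =>
    rw [projN_single]
    split_ifs with h
    · have : Finsupp.single x c = c • Finsupp.single x (1 : k) := by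
        rw [Finsupp.smul_single, smul_eq_mul, mul_one]
      rw [this]
      exact Submodule.smul_mem _ c (single_mem_Jsub norm h)
    · exact Submodule.zero_mem _

theorem sum_projN [Fintype X] [DecidableEq X] (norm : X → X) (f : X →₀ k) :
    ∑ z : X, projN k norm z f = f := by
  induction f using Finsupp.induction_linear with
  | zero => simp
  | add f g hf hg => simp only [map_add, Finset.sum_add_distrib, hf, hg]
  | single x c => simp [projN_single]

theorem graded_map_proj [DecidableEq X] (norm : X → X) (f : X → Submodule k (X →₀ k))
    (hf : ∀ z', f z' ≤ Jsub k norm z') (z : X) :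
    (⨆ z', f z').map (projN k norm z) ≤ f z := by
  rw [Submodule.map_iSup]
  apply iSup_le
  intro z'
  rintro w ⟨v, hv, rfl⟩
  by_cases hzz : z' = z
  · subst hzz
    rw [projN_fix norm z' (hf z' hv)]
    exact hv
  · rw [projN_kill norm hzz (hf z' hv)]
    exact Submodule.zero_mem _

theorem graded_inf [DecidableEq X] (norm : X → X) (f : X → Submodule k (X →₀ k))
    (hf : ∀ z', f z' ≤ Jsub k norm z') (z : X) :
    (⨆ z', f z') ⊓ Jsub k norm z ≤ f z := by
  rintro w ⟨hw1, hw2⟩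
  rw [← projN_fix norm z hw2]
  exact graded_map_proj norm f hf z ⟨w, hw1, rfl⟩

theorem graded_disjoint [Fintype X] [DecidableEq X] (norm : X → X)
    (f g : X → Submodule k (X →₀ k))
    (hf : ∀ z, f z ≤ Jsub k norm z) (hg : ∀ z, g z ≤ Jsub k norm z)
    (hd : ∀ z, Disjoint (f z) (g z)) :
    Disjoint (⨆ z, f z) (⨆ z, g z) := by
  rw [Submodule.disjoint_def]
  intro w hwf hwg
  have hz : ∀ z, projN k norm z w = 0 := by
    intro z
    exact Submodule.disjoint_def.mp (hd z) _
      (graded_map_proj norm f hf z ⟨w, hwf, rfl⟩)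
      (graded_map_proj norm g hg z ⟨w, hwg, rfl⟩)
  calc w = ∑ z : X, projN k norm z w := (sum_projN norm w).symm
    _ = 0 := by simp [hz]

end PhaseB

section PhaseC
variable {k : Type*} [Field k] {X : Type*} [Group X] [Fintype X]

set_option maxHeartbeats 1600000 in
theorem crossed_main (norm : X → X) (tact : X → X → X)
    (h1 : ∀ x, tact x 1 = x) (h2 : ∀ x y y', tact (tact x y) y' = tact x (y * y'))
    (h3 : ∀ x y, norm (tact x y) = y⁻¹ * norm x * y)
    (z₀ : X) (hz₀ : z₀ ∈ Set.range norm)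
    (zbar : X → X) (hzbar : ∀ z : X, IsConj z₀ z → z = (zbar z)⁻¹ * z₀ * zbar z) :
    (∀ J : Submodule k (X →₀ k), IsIrreducibleCentralizerSubrep k norm tact z₀ J →
      IsIrreducibleCrossedSubmodule k norm tact
        (⨆ z : {z : X // IsConj z₀ z}, J.map (linTact k tact (zbar z)))) ∧
    (∀ (n : ℕ) (Ji : Fin n → Submodule k (X →₀ k)),
      (∀ i, IsIrreducibleCentralizerSubrep k norm tact z₀ (Ji i)) →
      iSupIndep Ji → (⨆ i, Ji i) = Jsub k norm z₀ →
      (∀ i, IsIrreducibleCrossedSubmodule k norm tact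
        (⨆ z : {z : X // IsConj z₀ z}, (Ji i).map (linTact k tact (zbar z)))) ∧
      iSupIndep (fun i : Fin n =>
        ⨆ z : {z : X // IsConj z₀ z}, (Ji i).map (linTact k tact (zbar z))) ∧
      (⨆ i : Fin n, ⨆ z : {z : X // IsConj z₀ z}, (Ji i).map (linTact k tact (zbar z)))
        = Submodule.span k
            ((fun x => Finsupp.single x (1 : k)) '' (norm ⁻¹' {z : X | IsConj z₀ z}))) := by
  classical
  -- basic centralizer facts
  have hcent : ∀ c : X, c⁻¹ * z₀ * c = z₀ → c ∈ Subgroup.centralizer ({z₀} : Set X) := by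
    intro c h
    rw [Subgroup.mem_centralizer_iff]
    intro g hg
    rw [Set.mem_singleton_iff] at hg
    rw [hg]
    calc z₀ * c = c * (c⁻¹ * z₀ * c) := by group
      _ = c * z₀ := by rw [h]
  have hcent' : ∀ c : X, c ∈ Subgroup.centralizer ({z₀} : Set X) → c⁻¹ * z₀ * c = z₀ := by
    intro c h
    rw [Subgroup.mem_centralizer_iff] at h
    have := h z₀ (Set.mem_singleton z₀)
    calc c⁻¹ * z₀ * c = c⁻¹ * (z₀ * c) := by group
      _ = c⁻¹ * (c * z₀) := by rw [this]
      _ = z₀ := by group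
  have range_conj : ∀ w : X, IsConj z₀ w → w ∈ Set.range norm := by
    intro w hw
    obtain ⟨c, hc⟩ := isConj_iff.mp hw
    obtain ⟨x₀, hx₀⟩ := hz₀
    refine ⟨tact x₀ c⁻¹, ?_⟩
    rw [h3, hx₀, inv_inv]
    exact hc
  have conjmem : ∀ (z : X) (y : X), IsConj z₀ z → IsConj z₀ (y⁻¹ * z * y) := by
    intro z y hz
    exact hz.trans (isConj_iff.mpr ⟨y⁻¹, by group⟩)
  -- Part 1
  have part1 : ∀ J : Submodule k (X →₀ k), IsIrreducibleCentralizerSubrep k norm tact z₀ J →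
      IsIrreducibleCrossedSubmodule k norm tact
        (⨆ z : {z : X // IsConj z₀ z}, J.map (linTact k tact (zbar z))) := by
    intro J hJ
    obtain ⟨hJle, hJne, hJstab, hJirr⟩ := hJ
    have cstab : ∀ c ∈ Subgroup.centralizer ({z₀} : Set X),
        J.map (linTact k tact c) = J := by
      intro c hc
      refine le_antisymm (hJstab c hc) ?_
      have h := Submodule.map_mono (f := linTact k tact c)
        (hJstab c⁻¹ (inv_mem hc))
      rw [map_linTact_map tact h2, inv_mul_cancel, linTact_one tact h1,
        Submodule.map_id] at h
      exact h
    have comp_le : ∀ z : {z : X // IsConj z₀ z},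
        J.map (linTact k tact (zbar z)) ≤ Jsub k norm ↑z := by
      intro z
      calc J.map (linTact k tact (zbar ↑z))
          ≤ (Jsub k norm z₀).map (linTact k tact (zbar ↑z)) := Submodule.map_mono hJle
        _ = Jsub k norm ((zbar ↑z)⁻¹ * z₀ * zbar ↑z) := map_Jsub norm tact h1 h2 h3 _ _
        _ = Jsub k norm ↑z := by rw [← hzbar ↑z z.2]
    have compMap : ∀ (z : {z : X // IsConj z₀ z}) (y : X),
        (J.map (linTact k tact (zbar ↑z))).map (linTact k tact y)
          = J.map (linTact k tact (zbar (y⁻¹ * ↑z * y))) := by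
      intro z y
      rw [map_linTact_map tact h2]
      set w := y⁻¹ * ↑z * y with hw
      have hcw : IsConj z₀ w := conjmem ↑z y z.2
      have hkey : zbar ↑z * y = (zbar ↑z * y * (zbar w)⁻¹) * zbar w := by group
      have hmem : (zbar ↑z * y * (zbar w)⁻¹) ∈ Subgroup.centralizer ({z₀} : Set X) := by
        apply hcent
        have hb : (zbar ↑z)⁻¹ * z₀ * zbar ↑z = ↑z := (hzbar ↑z z.2).symm
        have hb' : (zbar w)⁻¹ * z₀ * zbar w = w := (hzbar w hcw).symm
        calc (zbar ↑z * y * (zbar w)⁻¹)⁻¹ * z₀ * (zbar ↑z * y * (zbar w)⁻¹)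
            = zbar w * (y⁻¹ * ((zbar ↑z)⁻¹ * z₀ * zbar ↑z) * y) * (zbar w)⁻¹ := by group
          _ = zbar w * (y⁻¹ * ↑z * y) * (zbar w)⁻¹ := by rw [hb]
          _ = zbar w * ((zbar w)⁻¹ * z₀ * zbar w) * (zbar w)⁻¹ := by rw [← hw, hb']
          _ = z₀ := by group
      rw [hkey, ← map_linTact_map tact h2, cstab _ hmem]
    refine ⟨?_, ⟨?_, ?_⟩, ?_⟩
    · -- nonzero
      intro hbot
      apply hJne
      have hz₀c : zbar z₀ ∈ Subgroup.centralizer ({z₀} : Set X) :=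
        hcent _ (hzbar z₀ (IsConj.refl z₀)).symm
      have : J.map (linTact k tact (zbar z₀)) ≤ ⊥ := by
        rw [← hbot]
        have h := le_iSup (fun z : {z : X // IsConj z₀ z} =>
          J.map (linTact k tact (zbar ↑z))) ⟨z₀, IsConj.refl z₀⟩
        simpa using h
      rw [cstab _ hz₀c] at this
      exact le_bot_iff.mp this
    · -- stable
      intro y
      rw [Submodule.map_iSup]
      apply iSup_le
      intro z
      rw [compMap z y]
      have h := le_iSup (fun z : {z : X // IsConj z₀ z} =>
        J.map (linTact k tact (zbar ↑z))) ⟨y⁻¹ * ↑z * y, conjmem ↑z y z.2⟩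
      simpa using h
    · -- homogeneous
      apply le_antisymm
      · apply iSup_le
        intro z
        have hle1 : J.map (linTact k tact (zbar ↑z)) ≤
            ⨆ z' : {z : X // IsConj z₀ z}, J.map (linTact k tact (zbar ↑z')) :=
          le_iSup (fun z' : {z : X // IsConj z₀ z} =>
            J.map (linTact k tact (zbar ↑z'))) z
        exact (le_inf hle1 (comp_le z)).trans
          (le_biSup (fun w => (⨆ z' : {z : X // IsConj z₀ z},
            J.map (linTact k tact (zbar ↑z'))) ⊓ Jsub k norm w) (range_conj ↑z z.2))
      · exact iSup₂_le fun w _ => inf_le_left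
    · -- minimal
      intro W hWc hWle
      by_cases hWbot : W = ⊥
      · exact Or.inl hWbot
      right
      obtain ⟨Wstab, Whom⟩ := hWc
      -- the graded family
      set fJ : X → Submodule k (X →₀ k) := fun w =>
        ⨆ _ : IsConj z₀ w, J.map (linTact k tact (zbar w)) with hfJdef
      have hfJ : ∀ w, fJ w ≤ Jsub k norm w := by
        intro w
        apply iSup_le
        intro hw
        exact comp_le ⟨w, hw⟩
      have hMJ : (⨆ z : {z : X // IsConj z₀ z}, J.map (linTact k tact (zbar ↑z)))
          = ⨆ w : X, fJ w := by
        rw [hfJdef, iSup_subtype']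
      -- find a nonzero homogeneous component of W
      have hex : ∃ w, W ⊓ Jsub k norm w ≠ ⊥ := by
        by_contra hall
        push_neg at hall
        apply hWbot
        rw [Whom]
        rw [← le_bot_iff]
        exact iSup₂_le fun w _ => le_of_eq (hall w)
      obtain ⟨z₁, hz₁ne⟩ := hex
      have hW₁le : W ⊓ Jsub k norm z₁ ≤ fJ z₁ := by
        refine (inf_le_inf_right _ hWle).trans ?_
        rw [hMJ]
        exact graded_inf norm fJ hfJ z₁
      have hz₁C : IsConj z₀ z₁ := by
        by_contra hcc
        apply hz₁ne
        rw [← le_bot_iff]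
        refine hW₁le.trans ?_
        rw [hfJdef]
        exact iSup_le fun h => absurd h hcc
      have hfJz₁ : fJ z₁ = J.map (linTact k tact (zbar z₁)) := by
        rw [hfJdef]; exact iSup_pos hz₁C
      set b := zbar z₁ with hbdef
      set W₁ := W ⊓ Jsub k norm z₁ with hW₁def
      set W₀ := W₁.map (linTact k tact b⁻¹) with hW₀def
      have hW₀le : W₀ ≤ J := by
        rw [hW₀def]
        refine (Submodule.map_mono (hW₁le.trans (le_of_eq hfJz₁))).trans ?_
        rw [map_linTact_inv tact h1 h2]
      have hW₁back : W₀.map (linTact k tact b) = W₁ := by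
        rw [hW₀def, map_linTact_map tact h2, inv_mul_cancel, linTact_one tact h1,
          Submodule.map_id]
      have hW₀stab : ∀ c ∈ Subgroup.centralizer ({z₀} : Set X),
          W₀.map (linTact k tact c) ≤ W₀ := by
        intro c hc
        have hb : b⁻¹ * z₀ * b = z₁ := (hzbar z₁ hz₁C).symm
        have hbz : b * z₁ * b⁻¹ = z₀ := by rw [← hb]; group
        have hcc : c⁻¹ * z₀ * c = z₀ := hcent' c hc
        have hdJ : (Jsub k norm z₁).map (linTact k tact (b⁻¹ * c * b)) =
            Jsub k norm z₁ := by
          rw [map_Jsub norm tact h1 h2 h3]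
          congr 1
          calc (b⁻¹ * c * b)⁻¹ * z₁ * (b⁻¹ * c * b)
              = b⁻¹ * (c⁻¹ * (b * z₁ * b⁻¹) * c) * b := by group
            _ = b⁻¹ * (c⁻¹ * z₀ * c) * b := by rw [hbz]
            _ = b⁻¹ * z₀ * b := by rw [hcc]
            _ = z₁ := hb
        have hW₁d : W₁.map (linTact k tact (b⁻¹ * c * b)) ≤ W₁ := by
          rw [hW₁def]
          refine (le_inf (Submodule.map_mono inf_le_left)
            (Submodule.map_mono inf_le_right)).trans ?_
          exact inf_le_inf (Wstab _) (le_of_eq hdJ)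
        calc W₀.map (linTact k tact c)
            = W₁.map (linTact k tact (b⁻¹ * c)) := by
              rw [hW₀def, map_linTact_map tact h2]
          _ = W₁.map (linTact k tact ((b⁻¹ * c * b) * b⁻¹)) := by
              congr 2
              group
          _ = (W₁.map (linTact k tact (b⁻¹ * c * b))).map (linTact k tact b⁻¹) := by
              rw [map_linTact_map tact h2]
          _ ≤ W₁.map (linTact k tact b⁻¹) := Submodule.map_mono hW₁d
          _ = W₀ := by rw [hW₀def]
      have hW₀ne : W₀ ≠ ⊥ := by
        intro hbb
        apply hz₁ne
        rw [← hW₁back, hbb, Submodule.map_bot]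
      have hW₀J : W₀ = J := (hJirr W₀ hW₀le hW₀stab).resolve_left hW₀ne
      have hW₁eq : W₁ = J.map (linTact k tact b) := by
        rw [← hW₁back, hW₀J]
      -- conclude W = MJ
      refine le_antisymm hWle ?_
      apply iSup_le
      intro z
      obtain ⟨c, hc⟩ := isConj_iff.mp (hz₁C.symm.trans z.2)
      have hzz : ((c⁻¹)⁻¹ * z₁ * c⁻¹ : X) = ↑z := by rw [inv_inv]; exact hc
      have hcm := compMap ⟨z₁, hz₁C⟩ c⁻¹
      simp only [] at hcm
      rw [hzz] at hcm
      calc J.map (linTact k tact (zbar ↑z))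
          = (J.map (linTact k tact (zbar z₁))).map (linTact k tact c⁻¹) := hcm.symm
        _ = W₁.map (linTact k tact c⁻¹) := by rw [← hbdef, ← hW₁eq]
        _ ≤ W.map (linTact k tact c⁻¹) := Submodule.map_mono inf_le_left
        _ ≤ W := Wstab c⁻¹
  refine ⟨part1, ?_⟩
  -- Part 2
  intro n Ji hJi hindep hsum
  refine ⟨fun i => part1 (Ji i) (hJi i), ?_, ?_⟩
  · -- independence
    set fI : Fin n → X → Submodule k (X →₀ k) := fun i w =>
      ⨆ _ : IsConj z₀ w, (Ji i).map (linTact k tact (zbar w)) with hfIdef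
    have hfI : ∀ i w, fI i w ≤ Jsub k norm w := by
      intro i w
      apply iSup_le
      intro hw
      calc (Ji i).map (linTact k tact (zbar w))
          ≤ (Jsub k norm z₀).map (linTact k tact (zbar w)) :=
            Submodule.map_mono (hJi i).1
        _ = Jsub k norm ((zbar w)⁻¹ * z₀ * zbar w) := map_Jsub norm tact h1 h2 h3 _ _
        _ = Jsub k norm w := by rw [← hzbar w hw]
    have hMi : ∀ i, (⨆ z : {z : X // IsConj z₀ z}, (Ji i).map (linTact k tact (zbar ↑z)))
        = ⨆ w : X, fI i w := by
      intro i
      rw [hfIdef, iSup_subtype']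
    rw [iSupIndep_def]
    intro i
    rw [hMi i]
    have hrest : (⨆ (j) (_ : j ≠ i),
        (⨆ z : {z : X // IsConj z₀ z}, (Ji j).map (linTact k tact (zbar ↑z))))
        = ⨆ w : X, ⨆ (j) (_ : j ≠ i), fI j w := by
      rw [iSup_congr fun j => iSup_congr fun _ => hMi j]
      rw [iSup_comm]
      exact iSup_congr fun w => iSup_comm
    rw [hrest]
    apply graded_disjoint norm _ _ (hfI i)
    · intro w
      exact iSup₂_le fun j _ => hfI j w
    · intro w
      by_cases hcw : IsConj z₀ w
      · have hfi : fI i w = (Ji i).map (linTact k tact (zbar w)) := by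
          rw [hfIdef]; exact iSup_pos hcw
        have hgw : (⨆ (j) (_ : j ≠ i), fI j w)
            = (⨆ (j) (_ : j ≠ i), Ji j).map (linTact k tact (zbar w)) := by
          rw [Submodule.map_iSup]
          refine iSup_congr fun j => ?_
          rw [Submodule.map_iSup]
          refine iSup_congr fun _ => ?_
          rw [hfIdef]
          exact iSup_pos hcw
        rw [hfi, hgw]
        rw [Submodule.disjoint_def]
        intro x hx1 hx2
        have hd := iSupIndep_def.mp hindep i
        rw [Submodule.disjoint_def] at hd
        have hinj := linTact_injective (k := k) tact h1 h2 (zbar w)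
        obtain ⟨a, ha, rfl⟩ := hx1
        obtain ⟨a', ha', haa⟩ := hx2
        have haa' : a = a' := (hinj haa).symm
        rw [haa'] at ha ⊢
        rw [hd a' ha ha', map_zero]
      · have : fI i w = ⊥ := by rw [hfIdef]; exact iSup_neg hcw
        rw [this]
        exact disjoint_bot_left
  · -- total sup
    have step1 : (⨆ i : Fin n, ⨆ z : {z : X // IsConj z₀ z},
        (Ji i).map (linTact k tact (zbar ↑z)))
        = ⨆ z : {z : X // IsConj z₀ z}, Jsub k norm ↑z := by
      rw [iSup_comm]
      refine iSup_congr fun z => ?_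
      rw [← Submodule.map_iSup, hsum, map_Jsub norm tact h1 h2 h3, ← hzbar ↑z z.2]
    rw [step1]
    apply le_antisymm
    · apply iSup_le
      intro z
      apply Submodule.span_mono
      apply Set.image_mono
      intro x hx
      rw [Set.mem_preimage, Set.mem_singleton_iff] at hx
      rw [Set.mem_preimage, Set.mem_setOf_eq, hx]
      exact z.2
    · rw [Submodule.span_le]
      rintro f ⟨x, hx, rfl⟩
      rw [Set.mem_preimage, Set.mem_setOf_eq] at hx
      have h := le_iSup (fun z : {z : X // IsConj z₀ z} => Jsub k norm ↑z) ⟨norm x, hx⟩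
      simp only [] at h
      exact h (single_mem_Jsub norm rfl)

end PhaseC

/-- **Irreducible crossed submodules from irreducible centralizer representations.**
Let `z₀ ∈ Z` with class `C` and fixed conjugators `z̄`.  If `J ⊆ J_{z₀}` is an
irreducible subrepresentation of the centralizer `X_{z₀}` then
`M_J = ⊕_{z∈C}(J ⋊̃ z̄)` is an irreducible crossed submodule of `k[X]`; and if
`J_{z₀} = J₁ ⊕ … ⊕ J_n` is a decomposition into irreducible
`X_{z₀}`-subrepresentations, then `M_C = span_k ‖·‖⁻¹(C) = M_{J₁} ⊕ … ⊕ M_{J_n}`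
is a decomposition into irreducible crossed submodules. -/
theorem irreducible_crossed_submodules_from_centralizer_reps
    {k X : Type*} [Field k] [Group X] [Fintype X] (G M : Subgroup X)
    (hbij : Function.Bijective (fun p : ↥G × ↥M => (p.1 : X) * (p.2 : X)))
    (rho : ↥M → ↥G → ↥G) (sig : ↥M → ↥G → ↥M)
    (hfact : ∀ (s : ↥M) (u : ↥G), (s : X) * (u : X) = (rho s u : X) * (sig s u : X))
    (norm : X → X)
    (hnorm : ∀ (v : ↥G) (t : ↥M), norm ((v : X) * (t : X)) = (v : X)⁻¹ * (t : X)⁻¹ * (v : X))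
    (tact : X → X → X)
    (htact : ∀ (v u : ↥G) (t s : ↥M),
      tact ((v : X) * (t : X)) ((u : X) * (s : X)) =
        (rho (sig s⁻¹ (v * u)⁻¹) (v * u) : X) *
          ((sig s⁻¹ (v * u)⁻¹ : X) * (t : X) * (sig s⁻¹ (v * u)⁻¹ : X)⁻¹))
    (z₀ : X) (hz₀ : z₀ ∈ Set.range norm)
    (zbar : X → X) (hzbar : ∀ z : X, IsConj z₀ z → z = (zbar z)⁻¹ * z₀ * zbar z) :
    (∀ J : Submodule k (X →₀ k), IsIrreducibleCentralizerSubrep k norm tact z₀ J →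
      IsIrreducibleCrossedSubmodule k norm tact
        (⨆ z : {z : X // IsConj z₀ z}, J.map (linTact k tact (zbar z)))) ∧
    (∀ (n : ℕ) (Ji : Fin n → Submodule k (X →₀ k)),
      (∀ i, IsIrreducibleCentralizerSubrep k norm tact z₀ (Ji i)) →
      iSupIndep Ji → (⨆ i, Ji i) = Jsub k norm z₀ →
      (∀ i, IsIrreducibleCrossedSubmodule k norm tact
        (⨆ z : {z : X // IsConj z₀ z}, (Ji i).map (linTact k tact (zbar z)))) ∧
      iSupIndep (fun i : Fin n =>
        ⨆ z : {z : X // IsConj z₀ z}, (Ji i).map (linTact k tact (zbar z))) ∧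
      (⨆ i : Fin n, ⨆ z : {z : X // IsConj z₀ z}, (Ji i).map (linTact k tact (zbar z)))
        = Submodule.span k
            ((fun x => Finsupp.single x (1 : k)) '' (norm ⁻¹' {z : X | IsConj z₀ z}))) := by
  obtain ⟨h1, h2, h3⟩ := tact_core hbij rho sig hfact norm hnorm tact htact
  exact crossed_main norm tact h1 h2 h3 z₀ hz₀ zbar hzbar
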